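/- In Euclidean space ℝⁿ there is no nontrivial stationary 1-cycle: if a finite collection of points p₁,…,p_l in ℝⁿ together with finitely many straight-line segments joining some of them (with positive integer multiplicities, every point adjacent to at least one segment) has the property that at every point pᵢ the sum of the unit vectors tangent to the adjacent segments (directed away from pᵢ, counted with multiplicity) vanishes, then all segments are constant (have zero length). -/

import Mathlib

open scoped BigOperators

/-- There is no nontrivial stationary 1-cycle in Euclidean space `ℝⁿ`.
A configuration consists of points `p 1, …, p l` (the vertices) and straight segments
indexed by `Fin m`, the segment `s` joining `p (a s)` to `p (b s)` with positive integer
multiplicity `mult s`; every vertex is adjacent to at least one segment.  At each vertex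
`i` the stationarity condition requires the sum, over adjacent segments counted with
multiplicity, of the unit vectors along the segments directed away from `p i` to vanish
(a constant segment contributes the zero vector, since `‖0‖⁻¹ • 0 = 0`).  Then every
segment must be constant (of zero length). -/
theorem no_stationary_one_cycle_in_euclidean_space
    (n l m : ℕ) (p : Fin l → EuclideanSpace ℝ (Fin n))
    (a b : Fin m → Fin l) (mult : Fin m → ℕ) (hmult : ∀ s, 0 < mult s)
    (hadj : ∀ i : Fin l, ∃ s : Fin m, a s = i ∨ b s = i)
    (hstat : ∀ i : Fin l,
      (∑ s : Fin m,
        ((if a s = i then (mult s : ℝ) • (‖p (b s) - p (a s)‖⁻¹ • (p (b s) - p (a s))) else 0)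
          + (if b s = i then (mult s : ℝ) • (‖p (a s) - p (b s)‖⁻¹ • (p (a s) - p (b s)))
              else 0))) = 0) :
    ∀ s : Fin m, p (a s) = p (b s) := by
  classical
  have hzero : ∑ i : Fin l, ∑ s : Fin m,
      (inner ℝ (p i)
        ((if a s = i then (mult s : ℝ) • (‖p (b s) - p (a s)‖⁻¹ • (p (b s) - p (a s))) else 0)
          + (if b s = i then (mult s : ℝ) • (‖p (a s) - p (b s)‖⁻¹ • (p (a s) - p (b s)))
              else 0)) : ℝ) = 0 := by
    have : ∀ i : Fin l, ∑ s : Fin m,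
        (inner ℝ (p i)
          ((if a s = i then (mult s : ℝ) • (‖p (b s) - p (a s)‖⁻¹ • (p (b s) - p (a s))) else 0)
            + (if b s = i then (mult s : ℝ) • (‖p (a s) - p (b s)‖⁻¹ • (p (a s) - p (b s)))
                else 0)) : ℝ) = 0 := by
      intro i
      rw [← inner_sum, hstat i, inner_zero_right]
    exact Finset.sum_eq_zero fun i _ => this i
  rw [Finset.sum_comm] at hzero
  have hterm : ∀ s : Fin m, ∑ i : Fin l,
      (inner ℝ (p i)
        ((if a s = i then (mult s : ℝ) • (‖p (b s) - p (a s)‖⁻¹ • (p (b s) - p (a s))) else 0)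
          + (if b s = i then (mult s : ℝ) • (‖p (a s) - p (b s)‖⁻¹ • (p (a s) - p (b s)))
              else 0)) : ℝ) = -((mult s : ℝ) * ‖p (b s) - p (a s)‖) := by
    intro s
    have hsplit : ∀ i : Fin l,
        (inner ℝ (p i)
          ((if a s = i then (mult s : ℝ) • (‖p (b s) - p (a s)‖⁻¹ • (p (b s) - p (a s))) else 0)
            + (if b s = i then (mult s : ℝ) • (‖p (a s) - p (b s)‖⁻¹ • (p (a s) - p (b s)))
                else 0)) : ℝ)
        = (if a s = i then
             (mult s : ℝ) * (‖p (b s) - p (a s)‖⁻¹ * (inner ℝ (p i) (p (b s) - p (a s)) : ℝ))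
           else 0)
          + (if b s = i then
             (mult s : ℝ) * (‖p (a s) - p (b s)‖⁻¹ * (inner ℝ (p i) (p (a s) - p (b s)) : ℝ))
           else 0) := by
      intro i
      rw [inner_add_right]
      congr 1 <;> split <;> simp only [real_inner_smul_right, inner_zero_right]
    simp only [hsplit, Finset.sum_add_distrib, Finset.sum_ite_eq, Finset.mem_univ, if_true]
    set d := p (b s) - p (a s) with hd
    have h2 : p (a s) - p (b s) = -d := by rw [hd]; abel
    rw [h2, norm_neg, inner_neg_right]
    have h3 : (inner ℝ (p (a s)) d : ℝ) - (inner ℝ (p (b s)) d : ℝ) = -(‖d‖^2) := by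
      rw [← inner_sub_left, h2, inner_neg_left, real_inner_self_eq_norm_sq]
    rcases eq_or_ne d 0 with h | h
    · simp [h]
    · have hn : ‖d‖ ≠ 0 := norm_ne_zero_iff.mpr h
      have h4 : (inner ℝ (p (a s)) d : ℝ) = inner ℝ (p (b s)) d - ‖d‖^2 := by linarith
      rw [h4]
      field_simp
      ring
  simp only [hterm, Finset.sum_neg_distrib] at hzero
  have hsum : ∑ s : Fin m, (mult s : ℝ) * ‖p (b s) - p (a s)‖ = 0 := by linarith [neg_eq_zero.mp hzero]
  intro s
  have hnn : ∀ t : Fin m, 0 ≤ (mult t : ℝ) * ‖p (b t) - p (a t)‖ := fun t =>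
    mul_nonneg (Nat.cast_nonneg _) (norm_nonneg _)
  have h0 : (mult s : ℝ) * ‖p (b s) - p (a s)‖ = 0 :=
    (Finset.sum_eq_zero_iff_of_nonneg (fun t _ => hnn t)).mp hsum s (Finset.mem_univ s)
  have hms : (mult s : ℝ) ≠ 0 := Nat.cast_ne_zero.mpr (hmult s).ne'
  have : ‖p (b s) - p (a s)‖ = 0 := by
    rcases mul_eq_zero.mp h0 with h | h
    · exact absurd h hms
    · exact h
  have := norm_eq_zero.mp this
  have := sub_eq_zero.mp this
  exact this.symm
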